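/- Let f : C → D be a homomorphism of cosemisimple coalgebras over ℂ. Then f is injective if and only if the corestriction functor from C-comodules to D-comodules is full on finite-dimensional comodules, equivalently, if and only if non-isomorphic simple C-comodules are sent to non-isomorphic (semisimple decompositions of) D-comodules with no new morphisms. -/

import Mathlib

open TensorProduct

variable (C : Type) [AddCommGroup C] [Module ℂ C] [Coalgebra ℂ C]

/-- A (right) comodule structure of a coalgebra `C` on a ℂ-module `V`. -/
structure CoactsOn (V : Type) [AddCommGroup V] [Module ℂ V] where
  ρ : V →ₗ[ℂ] V ⊗[ℂ] C
  counit_law : ∀ v : V,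
    TensorProduct.rid ℂ V (LinearMap.lTensor V (Coalgebra.counit (R := ℂ)) (ρ v)) = v
  coassoc : ∀ v : V,
    TensorProduct.assoc ℂ V C C (LinearMap.rTensor C ρ (ρ v)) =
      LinearMap.lTensor V (Coalgebra.comul (R := ℂ)) (ρ v)

variable {C}

/-- `U` is a subcomodule of the `C`-comodule `(V, ρ)`. -/
def IsSubcomodule {V : Type} [AddCommGroup V] [Module ℂ V] (ρ : CoactsOn C V)
    (U : Submodule ℂ V) : Prop :=
  ∀ u ∈ U, ρ.ρ u ∈ LinearMap.range (LinearMap.rTensor C U.subtype)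

/-- `φ` is a map of `C`-comodules. -/
def IsComodMap {V W : Type} [AddCommGroup V] [Module ℂ V] [AddCommGroup W] [Module ℂ W]
    (ρV : CoactsOn C V) (ρW : CoactsOn C W) (φ : V →ₗ[ℂ] W) : Prop :=
  ∀ v : V, ρW.ρ (φ v) = LinearMap.rTensor C φ (ρV.ρ v)

/-- `C` is cosemisimple: in every finite-dimensional comodule, every subcomodule has a
subcomodule complement (equivalently, every comodule is a direct sum of simples). -/
def IsCosemisimple (C : Type) [AddCommGroup C] [Module ℂ C] [Coalgebra ℂ C] : Prop :=
  ∀ (V : Type) [AddCommGroup V] [Module ℂ V] [FiniteDimensional ℂ V]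
    (ρ : CoactsOn C V) (U : Submodule ℂ V), IsSubcomodule ρ U →
      ∃ U' : Submodule ℂ V, IsSubcomodule ρ U' ∧ IsCompl U U'

open LinearMap

section Helpers

variable {M N P M' : Type} [AddCommGroup M] [Module ℂ M] [AddCommGroup N] [Module ℂ N]
  [AddCommGroup P] [Module ℂ P] [AddCommGroup M'] [Module ℂ M']

noncomputable def contr (ξ : Module.Dual ℂ N) : M ⊗[ℂ] N →ₗ[ℂ] M :=
  (TensorProduct.rid ℂ M).toLinearMap ∘ₗ LinearMap.lTensor M ξ

@[simp] lemma contr_tmul (ξ : Module.Dual ℂ N) (m : M) (n : N) :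
    contr ξ (m ⊗ₜ[ℂ] n) = ξ n • m := by
  simp [contr]

lemma contr_rTensor (ξ : Module.Dual ℂ N) (φ : M →ₗ[ℂ] M') (z : M ⊗[ℂ] N) :
    contr ξ (rTensor N φ z) = φ (contr ξ z) := by
  induction z using TensorProduct.induction_on with
  | zero => simp
  | tmul m n => simp
  | add a b ha hb => simp [map_add, ha, hb]

lemma contr_lTensor (ξ : Module.Dual ℂ P) (g : N →ₗ[ℂ] P) (z : M ⊗[ℂ] N) :
    contr ξ (lTensor M g z) = contr (ξ ∘ₗ g) z := by
  induction z using TensorProduct.induction_on with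
  | zero => simp
  | tmul m n => simp
  | add a b ha hb => simp [map_add, ha, hb]

/-- Key lemma: if all right-contractions of `z` lie in `U`, then `z` comes from `U ⊗ N`. -/
lemma mem_range_rTensor_subtype (U : Submodule ℂ M) (z : M ⊗[ℂ] N)
    (h : ∀ ξ : Module.Dual ℂ N, contr ξ z ∈ U) :
    z ∈ LinearMap.range (rTensor N U.subtype) := by
  classical
  let b : Module.Basis _ ℂ N := Module.Basis.ofVectorSpace ℂ N
  let e : M ⊗[ℂ] N ≃ₗ[ℂ] M ⊗[ℂ] (_ →₀ ℂ) :=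
    TensorProduct.congr (LinearEquiv.refl ℂ M) b.repr
  let e2 := TensorProduct.finsuppScalarRight ℂ ℂ M (Module.Basis.ofVectorSpaceIndex ℂ N)
  have hcoord : ∀ (z : M ⊗[ℂ] N) j, e2 (e z) j = contr (b.coord j) z := by
    intro z j
    induction z using TensorProduct.induction_on with
    | zero => simp
    | tmul m n =>
        simp [e, e2, TensorProduct.congr_tmul, TensorProduct.finsuppScalarRight_apply_tmul_apply,
          Module.Basis.coord_apply]
    | add a c ha hc => simp [map_add, Finsupp.add_apply, ha, hc]
  have hz : z = ∑ j ∈ (e2 (e z)).support, (e2 (e z)) j ⊗ₜ[ℂ] (b j : N) := by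
    have h0 : e2 (e z) = ∑ j ∈ (e2 (e z)).support, Finsupp.single j ((e2 (e z)) j) := by
      conv_lhs => rw [← Finsupp.sum_single (e2 (e z))]
      rfl
    calc z = e.symm (e2.symm (e2 (e z))) := by simp
    _ = e.symm (e2.symm (∑ j ∈ (e2 (e z)).support, Finsupp.single j ((e2 (e z)) j))) := by
        rw [← h0]
    _ = ∑ j ∈ (e2 (e z)).support, (e2 (e z)) j ⊗ₜ[ℂ] (b j : N) := by
        rw [map_sum, map_sum]
        refine Finset.sum_congr rfl fun j _ => ?_
        have h1 : e2.symm (Finsupp.single j ((e2 (e z)) j)) = (e2 (e z)) j ⊗ₜ[ℂ] Finsupp.single j (1:ℂ) := by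
          apply e2.injective
          simp only [LinearEquiv.apply_symm_apply]
          ext i
          rw [TensorProduct.finsuppScalarRight_apply_tmul_apply]
          by_cases hij : i = j <;> simp [Finsupp.single_apply, hij]
        rw [h1]
        simp only [e, TensorProduct.congr_symm_tmul, LinearEquiv.refl_symm, LinearEquiv.refl_apply]
        congr 1
  rw [hz]
  refine Submodule.sum_mem _ fun j _ => ?_
  exact ⟨⟨(e2 (e z)) j, hcoord z j ▸ h _⟩ ⊗ₜ[ℂ] (b j : N), rfl⟩

lemma eq_zero_of_contr_eq_zero (z : M ⊗[ℂ] N)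
    (h : ∀ ξ : Module.Dual ℂ N, contr ξ z = 0) : z = 0 := by
  obtain ⟨w, hw⟩ := mem_range_rTensor_subtype (⊥ : Submodule ℂ M) z (fun ξ => by simp [h ξ])
  have hb : (⊥ : Submodule ℂ M).subtype = 0 := by
    ext x
    have : (x : M) = 0 := x.2
    simp [this]
  rw [← hw, hb, rTensor_zero]; simp

lemma eq_of_contr_eq (z₁ z₂ : M ⊗[ℂ] N)
    (h : ∀ ξ : Module.Dual ℂ N, contr ξ z₁ = contr ξ z₂) : z₁ = z₂ := by
  have := eq_zero_of_contr_eq_zero (z₁ - z₂) (fun ξ => by simp [map_sub, h ξ])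
  exact sub_eq_zero.mp this

end Helpers

section CoactHelpers

variable {V W : Type} [AddCommGroup V] [Module ℂ V] [AddCommGroup W] [Module ℂ W]
variable {D : Type} [AddCommGroup D] [Module ℂ D] [Coalgebra ℂ D]

noncomputable def cact (ρ : CoactsOn C V) (ξ : Module.Dual ℂ C) : V →ₗ[ℂ] V :=
  contr ξ ∘ₗ ρ.ρ

lemma cact_apply (ρ : CoactsOn C V) (ξ : Module.Dual ℂ C) (v : V) :
    cact ρ ξ v = contr ξ (ρ.ρ v) := rfl

@[simp] lemma cact_counit (ρ : CoactsOn C V) (v : V) :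
    cact ρ (Coalgebra.counit (R := ℂ)) v = v := ρ.counit_law v

/-- `C` coacting on itself by comultiplication. -/
noncomputable def comulCoacts : CoactsOn C C where
  ρ := Coalgebra.comul
  counit_law c := by
    have := Coalgebra.lTensor_counit_comul (R := ℂ) c
    rw [this]; simp
  coassoc c := Coalgebra.coassoc_apply c

/-- Convolution of functionals. -/
noncomputable def conv (η ξ : Module.Dual ℂ C) : Module.Dual ℂ C :=
  η ∘ₗ cact comulCoacts ξ

lemma cact_cact (ρ : CoactsOn C V) (η ξ : Module.Dual ℂ C) (v : V) :
    cact ρ η (cact ρ ξ v) = cact ρ (conv η ξ) v := by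
  set θ : Module.Dual ℂ (C ⊗[ℂ] C) :=
    (TensorProduct.lid ℂ ℂ).toLinearMap ∘ₗ TensorProduct.map η ξ with hθ
  have hθ' : θ = η ∘ₗ (contr ξ : C ⊗[ℂ] C →ₗ[ℂ] C) := by
    apply TensorProduct.ext'
    intro a b
    simp [hθ, mul_comm]
  have hA : contr θ (lTensor V (Coalgebra.comul (R := ℂ)) (ρ.ρ v)) =
      cact ρ (conv η ξ) v := by
    rw [contr_lTensor, cact_apply]
    congr 1
    rw [hθ']
    rfl
  have hB : ∀ t : (V ⊗[ℂ] C) ⊗[ℂ] C,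
      contr θ (TensorProduct.assoc ℂ V C C t) = contr ξ (rTensor C (contr η) t) := by
    intro t
    induction t using TensorProduct.induction_on with
    | zero => simp
    | tmul vc c =>
        induction vc using TensorProduct.induction_on with
        | zero => simp
        | tmul v' c' => simp [hθ, smul_smul, mul_comm]
        | add a b ha hb => simp only [add_tmul, map_add, ha, hb]
    | add a b ha hb => simp only [map_add, ha, hb]
  have hthis := hB (rTensor C ρ.ρ (ρ.ρ v))
  rw [ρ.coassoc v, hA] at hthis
  have hC : contr ξ (rTensor C (contr η) (rTensor C ρ.ρ (ρ.ρ v))) =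
      cact ρ η (cact ρ ξ v) := by
    rw [← LinearMap.comp_apply (rTensor C (contr η)) (rTensor C ρ.ρ) (ρ.ρ v),
      ← rTensor_comp, contr_rTensor]
    rfl
  rw [hC] at hthis
  exact hthis.symm

lemma counit_cact (η : Module.Dual ℂ C) (c : C) :
    Coalgebra.counit (R := ℂ) (cact comulCoacts η c) = η c := by
  obtain ⟨s, hs⟩ := TensorProduct.exists_finset (R := ℂ) (Coalgebra.comul (R := ℂ) c)
  have h1 : Coalgebra.counit (R := ℂ) (cact comulCoacts η c)
      = ∑ p ∈ s, η p.2 * Coalgebra.counit (R := ℂ) p.1 := by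
    rw [cact_apply]
    show Coalgebra.counit (contr η (Coalgebra.comul (R := ℂ) c)) = _
    rw [hs, map_sum, map_sum]
    refine Finset.sum_congr rfl fun p _ => ?_
    simp [smul_eq_mul]
  have h2 := congrArg (LinearMap.rTensor C (Coalgebra.counit (R := ℂ))) hs
  rw [Coalgebra.rTensor_counit_comul] at h2
  have h3 := congrArg (fun z => η (TensorProduct.lid ℂ C z)) h2
  simp only [map_sum, rTensor_tmul, TensorProduct.lid_tmul, TensorProduct.mk_apply,
    one_smul, map_smul] at h3
  rw [h1, h3]
  refine Finset.sum_congr rfl fun p _ => ?_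
  simp [smul_eq_mul, mul_comm]

noncomputable def cactL (ρ : CoactsOn C V) : Module.Dual ℂ C →ₗ[ℂ] Module.End ℂ V where
  toFun ξ := cact ρ ξ
  map_add' ξ η := by
    ext v
    simp only [cact, contr, LinearMap.comp_apply, lTensor_add, LinearMap.add_apply, map_add]
  map_smul' r ξ := by
    ext v
    simp only [cact, contr, LinearMap.comp_apply, lTensor_smul, LinearMap.smul_apply, map_smul,
      RingHom.id_apply]

@[simp] lemma cactL_apply (ρ : CoactsOn C V) (ξ : Module.Dual ℂ C) :
    cactL ρ ξ = cact ρ ξ := rfl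

/-- Corestriction of a comodule along a coalgebra homomorphism. -/
noncomputable def cores (f : C →ₗc[ℂ] D) (ρ : CoactsOn C V) : CoactsOn D V where
  ρ := lTensor V f.toLinearMap ∘ₗ ρ.ρ
  counit_law v := by
    show contr (Coalgebra.counit (R := ℂ)) (lTensor V f.toLinearMap (ρ.ρ v)) = v
    rw [contr_lTensor]
    have hc : (Coalgebra.counit (R := ℂ)) ∘ₗ f.toLinearMap = Coalgebra.counit (R := ℂ) :=
      CoalgHomClass.counit_comp f
    rw [hc]
    exact ρ.counit_law v
  coassoc v := by
    have lT : ∀ {A B E : Type} [AddCommGroup A] [Module ℂ A] [AddCommGroup B] [Module ℂ B]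
        [AddCommGroup E] [Module ℂ E] (g : B →ₗ[ℂ] E),
        lTensor A g = TensorProduct.map (LinearMap.id : A →ₗ[ℂ] A) g := fun _ => rfl
    set fl := f.toLinearMap with hfl
    show TensorProduct.assoc ℂ V D D
        (rTensor D (lTensor V fl ∘ₗ ρ.ρ) (lTensor V fl (ρ.ρ v))) =
      lTensor V (Coalgebra.comul (R := ℂ)) (lTensor V fl (ρ.ρ v))
    have h1 : rTensor D (lTensor V fl ∘ₗ ρ.ρ) ∘ₗ lTensor V fl =
        TensorProduct.map (TensorProduct.map (LinearMap.id : V →ₗ[ℂ] V) fl) fl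
          ∘ₗ rTensor C ρ.ρ := by
      rw [rTensor, lT, rTensor, ← TensorProduct.map_comp, ← TensorProduct.map_comp]
      simp
    have h2 := TensorProduct.map_map_assoc (LinearMap.id : V →ₗ[ℂ] V) fl fl
      (rTensor C ρ.ρ (ρ.ρ v))
    calc TensorProduct.assoc ℂ V D D (rTensor D (lTensor V fl ∘ₗ ρ.ρ) (lTensor V fl (ρ.ρ v)))
        = TensorProduct.assoc ℂ V D D (TensorProduct.map
            (TensorProduct.map (LinearMap.id : V →ₗ[ℂ] V) fl) fl
            (rTensor C ρ.ρ (ρ.ρ v))) := by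
          rw [← LinearMap.comp_apply, h1]; rfl
      _ = TensorProduct.map (LinearMap.id : V →ₗ[ℂ] V) (TensorProduct.map fl fl)
            (TensorProduct.assoc ℂ V C C (rTensor C ρ.ρ (ρ.ρ v))) := h2.symm
      _ = TensorProduct.map (LinearMap.id : V →ₗ[ℂ] V) (TensorProduct.map fl fl)
            (lTensor V (Coalgebra.comul (R := ℂ)) (ρ.ρ v)) := by rw [ρ.coassoc v]
      _ = lTensor V (Coalgebra.comul (R := ℂ)) (lTensor V fl (ρ.ρ v)) := by
          have hf : TensorProduct.map fl fl ∘ₗ (Coalgebra.comul (R := ℂ)) =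
              (Coalgebra.comul (R := ℂ)) ∘ₗ fl := CoalgHomClass.map_comp_comul f
          have hcomp : TensorProduct.map (LinearMap.id : V →ₗ[ℂ] V) (TensorProduct.map fl fl)
              ∘ₗ lTensor V (Coalgebra.comul (R := ℂ)) =
              lTensor V (Coalgebra.comul (R := ℂ)) ∘ₗ lTensor V fl := by
            rw [lT, lT, lT, ← TensorProduct.map_comp, ← TensorProduct.map_comp, hf]
          exact LinearMap.congr_fun hcomp (ρ.ρ v)

@[simp] lemma cores_ρ (f : C →ₗc[ℂ] D) (ρ : CoactsOn C V) :
    (cores f ρ).ρ = lTensor V f.toLinearMap ∘ₗ ρ.ρ := rfl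

lemma cact_cores (f : C →ₗc[ℂ] D) (ρ : CoactsOn C V) (ξ : Module.Dual ℂ D) (v : V) :
    cact (cores f ρ) ξ v = cact ρ (ξ ∘ₗ f.toLinearMap) v := by
  rw [cact_apply, cact_apply, cores_ρ, LinearMap.comp_apply, contr_lTensor]

lemma cact_mem_of_isSubcomodule {ρ : CoactsOn C V} {U : Submodule ℂ V}
    (hU : IsSubcomodule ρ U) (ξ : Module.Dual ℂ C) {u : V} (hu : u ∈ U) :
    cact ρ ξ u ∈ U := by
  obtain ⟨w, hw⟩ := hU u hu
  rw [cact_apply, ← hw, contr_rTensor]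
  exact (contr ξ w).2

lemma isSubcomodule_of_cact {ρ : CoactsOn C V} {U : Submodule ℂ V}
    (h : ∀ u ∈ U, ∀ ξ : Module.Dual ℂ C, cact ρ ξ u ∈ U) : IsSubcomodule ρ U :=
  fun u hu => mem_range_rTensor_subtype U (ρ.ρ u) (fun ξ => h u hu ξ)

/-- The direct sum (power) comodule. -/
noncomputable def piCoacts (n : ℕ) (ρ : CoactsOn C V) : CoactsOn C (Fin n → V) where
  ρ := ∑ i : Fin n, rTensor C (LinearMap.single ℂ (fun _ : Fin n => V) i) ∘ₗ ρ.ρ ∘ₗ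
        LinearMap.proj i
  counit_law w := by
    show contr (Coalgebra.counit (R := ℂ)) _ = w
    rw [LinearMap.sum_apply, map_sum]
    have : ∀ i : Fin n, contr (Coalgebra.counit (R := ℂ))
        ((rTensor C (LinearMap.single ℂ (fun _ : Fin n => V) i) ∘ₗ ρ.ρ ∘ₗ
          LinearMap.proj i) w) = Pi.single i (w i) := by
      intro i
      rw [LinearMap.comp_apply, LinearMap.comp_apply, contr_rTensor]
      simp only [LinearMap.proj_apply]
      have : contr (Coalgebra.counit (R := ℂ)) (ρ.ρ (w i)) = w i := ρ.counit_law (w i)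
      rw [this]
      rfl
    rw [Finset.sum_congr rfl (fun i _ => this i)]
    exact Finset.univ_sum_single w
  coassoc w := by
    set S : Fin n → (V →ₗ[ℂ] (Fin n → V)) := fun i => LinearMap.single ℂ (fun _ : Fin n => V) i
      with hS
    set P : (Fin n → V) →ₗ[ℂ] (Fin n → V) ⊗[ℂ] C :=
      ∑ i : Fin n, rTensor C (S i) ∘ₗ ρ.ρ ∘ₗ LinearMap.proj i with hP
    show TensorProduct.assoc ℂ (Fin n → V) C C (rTensor C P (P w)) =
      lTensor (Fin n → V) (Coalgebra.comul (R := ℂ)) (P w)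
    have hPS : ∀ i : Fin n, P ∘ₗ S i = rTensor C (S i) ∘ₗ ρ.ρ := by
      intro i
      apply LinearMap.ext; intro v
      rw [hP, LinearMap.comp_apply, LinearMap.sum_apply]
      rw [Finset.sum_eq_single i]
      · simp [hS]
      · intro j _ hj
        have h0 : ((S i) v) j = 0 := by
          simp [hS]
          exact Pi.single_eq_of_ne (M := fun _ : Fin n => V) hj v
        simp [LinearMap.comp_apply, LinearMap.proj_apply, h0]
      · intro h; exact absurd (Finset.mem_univ i) h
    have hPw : P w = ∑ i : Fin n, rTensor C (S i) (ρ.ρ (w i)) := by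
      rw [hP, LinearMap.sum_apply]; rfl
    rw [hPw, map_sum, map_sum]
    have hterm : ∀ i : Fin n,
        TensorProduct.assoc ℂ (Fin n → V) C C (rTensor C P (rTensor C (S i) (ρ.ρ (w i)))) =
        lTensor (Fin n → V) (Coalgebra.comul (R := ℂ)) (rTensor C (S i) (ρ.ρ (w i))) := by
      intro i
      have e1 : rTensor C P (rTensor C (S i) (ρ.ρ (w i))) =
          rTensor C (rTensor C (S i)) (rTensor C ρ.ρ (ρ.ρ (w i))) := by
        rw [← LinearMap.comp_apply, ← rTensor_comp, hPS i, rTensor_comp,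
          LinearMap.comp_apply]
      rw [e1]
      have e2 := TensorProduct.map_map_assoc (S i) (LinearMap.id : C →ₗ[ℂ] C)
        (LinearMap.id : C →ₗ[ℂ] C) (rTensor C ρ.ρ (ρ.ρ (w i)))
      rw [show TensorProduct.map (LinearMap.id : C →ₗ[ℂ] C) (LinearMap.id : C →ₗ[ℂ] C)
        = (LinearMap.id : C ⊗[ℂ] C →ₗ[ℂ] C ⊗[ℂ] C) from TensorProduct.map_id] at e2
      have e3 : rTensor C (rTensor C (S i)) = TensorProduct.map (TensorProduct.map (S i)
          (LinearMap.id : C →ₗ[ℂ] C)) (LinearMap.id : C →ₗ[ℂ] C) := rfl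
      rw [e3, ← e2, ρ.coassoc (w i)]
      rw [← LinearMap.comp_apply, ← LinearMap.comp_apply]
      have e4 : TensorProduct.map (S i) (LinearMap.id : C ⊗[ℂ] C →ₗ[ℂ] C ⊗[ℂ] C) ∘ₗ
          lTensor V (Coalgebra.comul (R := ℂ)) =
          lTensor (Fin n → V) (Coalgebra.comul (R := ℂ)) ∘ₗ rTensor C (S i) := by
        rw [show TensorProduct.map (S i) (LinearMap.id : C ⊗[ℂ] C →ₗ[ℂ] C ⊗[ℂ] C) =
          rTensor (C ⊗[ℂ] C) (S i) from rfl, rTensor_comp_lTensor, lTensor_comp_rTensor]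
      rw [e4]
      rfl
    rw [Finset.sum_congr rfl (fun i _ => hterm i), ← map_sum]

lemma piCoacts_cact (n : ℕ) (ρ : CoactsOn C V) (ξ : Module.Dual ℂ C) (w : Fin n → V)
    (i : Fin n) : cact (piCoacts n ρ) ξ w i = cact ρ ξ (w i) := by
  rw [cact_apply]
  show contr ξ ((∑ j : Fin n, rTensor C (LinearMap.single ℂ (fun _ : Fin n => V) j) ∘ₗ ρ.ρ ∘ₗ
        LinearMap.proj j) w) i = _
  rw [LinearMap.sum_apply, map_sum, Finset.sum_apply]
  rw [Finset.sum_eq_single i]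
  · rw [LinearMap.comp_apply, LinearMap.comp_apply, contr_rTensor]
    simp [cact_apply]
  · intro j _ hj
    rw [LinearMap.comp_apply, LinearMap.comp_apply, contr_rTensor]
    have := Pi.single_eq_of_ne (M := fun _ : Fin n => V) (Ne.symm hj)
      (contr ξ (ρ.ρ ((LinearMap.proj (R := ℂ) (φ := fun _ : Fin n => V) j) w)))
    simpa [LinearMap.single_apply] using this
  · intro h; exact absurd (Finset.mem_univ i) h


variable (U : Submodule ℂ C)
  (hstab : ∀ v ∈ U, ∀ ξ : Module.Dual ℂ C, cact comulCoacts ξ v ∈ U)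

lemma subtype_rTensor_injective :
    Function.Injective (rTensor C U.subtype) :=
  Module.Flat.rTensor_preserves_injective_linearMap U.subtype U.injective_subtype

noncomputable def subρ : ↥U →ₗ[ℂ] ↥U ⊗[ℂ] C :=
  (LinearEquiv.ofInjective (rTensor C U.subtype)
      (subtype_rTensor_injective U)).symm.toLinearMap ∘ₗ
    LinearMap.codRestrict (LinearMap.range (rTensor C U.subtype))
      ((Coalgebra.comul (R := ℂ)) ∘ₗ U.subtype)
      (fun v => mem_range_rTensor_subtype U _ (fun ξ => hstab (v : C) v.2 ξ))

lemma subρ_spec (v : ↥U) :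
    rTensor C U.subtype (subρ U hstab v) = Coalgebra.comul (R := ℂ) (v : C) := by
  rw [subρ, LinearMap.comp_apply]
  exact LinearEquiv.ofInjective_symm_apply (f := rTensor C U.subtype) _

/-- A stable subspace of `C` is a comodule. -/
noncomputable def subCoacts : CoactsOn C ↥U where
  ρ := subρ U hstab
  counit_law v := by
    apply U.injective_subtype
    show (U.subtype) (contr (Coalgebra.counit (R := ℂ)) (subρ U hstab v)) = _
    rw [← contr_rTensor, subρ_spec U hstab v]
    exact comulCoacts.counit_law (v : C)
  coassoc v := by
    have hinj : Function.Injective (rTensor (C ⊗[ℂ] C) U.subtype) :=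
      Module.Flat.rTensor_preserves_injective_linearMap U.subtype U.injective_subtype
    apply hinj
    have hjρ : rTensor C U.subtype ∘ₗ subρ U hstab =
        (Coalgebra.comul (R := ℂ)) ∘ₗ U.subtype := LinearMap.ext (subρ_spec U hstab)
    have lhs : rTensor (C ⊗[ℂ] C) U.subtype
        (TensorProduct.assoc ℂ ↥U C C (rTensor C (subρ U hstab) (subρ U hstab v))) =
        lTensor C (Coalgebra.comul (R := ℂ)) (Coalgebra.comul (R := ℂ) (v : C)) := by
      have e2 := TensorProduct.map_map_assoc U.subtype (LinearMap.id : C →ₗ[ℂ] C)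
        (LinearMap.id : C →ₗ[ℂ] C) (rTensor C (subρ U hstab) (subρ U hstab v))
      rw [show TensorProduct.map (LinearMap.id : C →ₗ[ℂ] C) (LinearMap.id : C →ₗ[ℂ] C)
        = (LinearMap.id : C ⊗[ℂ] C →ₗ[ℂ] C ⊗[ℂ] C) from TensorProduct.map_id] at e2
      rw [show rTensor (C ⊗[ℂ] C) U.subtype
        = TensorProduct.map U.subtype (LinearMap.id : C ⊗[ℂ] C →ₗ[ℂ] C ⊗[ℂ] C) from rfl]
      rw [e2]
      rw [show TensorProduct.map (TensorProduct.map U.subtype (LinearMap.id : C →ₗ[ℂ] C))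
        (LinearMap.id : C →ₗ[ℂ] C) = rTensor C (rTensor C U.subtype) from rfl]
      rw [← LinearMap.comp_apply (rTensor C (rTensor C U.subtype)), ← rTensor_comp, hjρ,
        rTensor_comp, LinearMap.comp_apply, subρ_spec U hstab v]
      exact Coalgebra.coassoc_apply (v : C)
    have rhs : rTensor (C ⊗[ℂ] C) U.subtype
        (lTensor ↥U (Coalgebra.comul (R := ℂ)) (subρ U hstab v)) =
        lTensor C (Coalgebra.comul (R := ℂ)) (Coalgebra.comul (R := ℂ) (v : C)) := by
      rw [← LinearMap.comp_apply, rTensor_comp_lTensor, ← lTensor_comp_rTensor,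
        LinearMap.comp_apply, subρ_spec U hstab v]
    rw [lhs, rhs]

lemma subCoacts_cact (ξ : Module.Dual ℂ C) (v : ↥U) :
    ((cact (subCoacts U hstab) ξ v : ↥U) : C) = cact comulCoacts ξ (v : C) := by
  show (U.subtype) (contr ξ ((subCoacts U hstab).ρ v)) = _
  rw [← contr_rTensor]
  rw [show (subCoacts U hstab).ρ = subρ U hstab from rfl, subρ_spec U hstab v]
  rfl

end CoactHelpers

/-- a homomorphism `f : C → D` of cosemisimple coalgebras over ℂ is
injective if and only if the corestriction functor from `C`-comodules to `D`-comodules is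
full on finite-dimensional comodules. -/
theorem cosemisimple_coalgebra_map_injective_iff_corestriction_full
    (D : Type) [AddCommGroup D] [Module ℂ D] [Coalgebra ℂ D]
    (hC : IsCosemisimple C) (hD : IsCosemisimple D)
    (f : C →ₗc[ℂ] D) :
    Function.Injective f ↔
      ∀ (V W : Type) [AddCommGroup V] [Module ℂ V] [FiniteDimensional ℂ V]
        [AddCommGroup W] [Module ℂ W] [FiniteDimensional ℂ W]
        (ρV : CoactsOn C V) (ρW : CoactsOn C W) (φ : V →ₗ[ℂ] W),
        -- `φ` is a map between the corestricted `D`-comodules …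
        (∀ v : V, LinearMap.lTensor W f.toLinearMap (ρW.ρ (φ v)) =
          LinearMap.rTensor D φ (LinearMap.lTensor V f.toLinearMap (ρV.ρ v))) →
        -- … implies `φ` is a map of `C`-comodules.
        IsComodMap ρV ρW φ := by
  constructor
  · -- easy direction
    intro hf V W _ _ _ _ _ _ ρV ρW φ hcomm v
    have hinj : Function.Injective (lTensor W f.toLinearMap) :=
      Module.Flat.lTensor_preserves_injective_linearMap f.toLinearMap hf
    apply hinj
    rw [hcomm v, ← LinearMap.comp_apply, ← LinearMap.comp_apply, rTensor_comp_lTensor,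
      ← lTensor_comp_rTensor]
    rfl
  · -- hard direction
    intro hfull
    classical
    have hker : ∀ x : C, f x = 0 → x = 0 := by
      intro x hx
      by_contra hx0
      -- a functional with ξ₀ x = 1
      have hne : ¬ ∀ ζ : Module.Dual ℂ C, ζ x = 0 := by
        rw [Module.forall_dual_apply_eq_zero_iff]; exact hx0
      push_neg at hne
      obtain ⟨ζ, hζ⟩ := hne
      set ξ₀ : Module.Dual ℂ C := (ζ x)⁻¹ • ζ with hξ₀
      have hξ₀x : ξ₀ x = 1 := by
        rw [hξ₀]; simp [inv_mul_cancel₀ hζ]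
      -- the finite-dimensional subcomodule generated by x
      set V₀ : Submodule ℂ C :=
        Submodule.span ℂ {y | ∃ ξ : Module.Dual ℂ C, cact comulCoacts ξ x = y} with hV₀
      have hxV : x ∈ V₀ := Submodule.subset_span ⟨Coalgebra.counit (R := ℂ), by simp⟩
      have hstab : ∀ v ∈ V₀, ∀ ξ : Module.Dual ℂ C, cact comulCoacts ξ v ∈ V₀ := by
        intro v hv ξ
        induction hv using Submodule.span_induction with
        | mem y hy =>
            obtain ⟨η, rfl⟩ := hy
            rw [cact_cact]
            exact Submodule.subset_span ⟨conv ξ η, rfl⟩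
        | zero => simp
        | add a b _ _ ha hb => rw [map_add]; exact Submodule.add_mem _ ha hb
        | smul r a _ ha => rw [map_smul]; exact Submodule.smul_mem _ r ha
      haveI hfd : FiniteDimensional ℂ ↥V₀ := by
        obtain ⟨s, hs⟩ := TensorProduct.exists_finset (R := ℂ) (Coalgebra.comul (R := ℂ) x)
        have hle : V₀ ≤ Submodule.span ℂ ((s.image Prod.fst : Finset C) : Set C) := by
          rw [hV₀, Submodule.span_le]
          rintro y ⟨ξ, rfl⟩
          rw [cact_apply]
          show contr ξ (Coalgebra.comul (R := ℂ) x) ∈ _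
          rw [hs, map_sum]
          refine Submodule.sum_mem _ fun p hp => ?_
          rw [contr_tmul]
          exact Submodule.smul_mem _ _ (Submodule.subset_span
            (Finset.mem_coe.mpr (Finset.mem_image_of_mem Prod.fst hp)))
        haveI : FiniteDimensional ℂ
            ↥(Submodule.span ℂ ((s.image Prod.fst : Finset C) : Set C)) :=
          FiniteDimensional.span_of_finite ℂ (Finset.finite_toSet _)
        exact Submodule.finiteDimensional_of_le hle
      -- the comodule structures
      set ρV : CoactsOn C ↥V₀ := subCoacts V₀ hstab with hρV
      set ρ' : CoactsOn D ↥V₀ := cores f ρV with hρ'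
      set n : ℕ := Module.finrank ℂ ↥V₀ with hn
      set bV : Module.Basis (Fin n) ℂ ↥V₀ := Module.finBasis ℂ ↥V₀ with hbV
      set ρn : CoactsOn D (Fin n → ↥V₀) := piCoacts n ρ' with hρn
      set τ : Module.End ℂ ↥V₀ →ₗ[ℂ] (Fin n → ↥V₀) :=
        LinearMap.pi (fun i => LinearMap.applyₗ (bV i)) with hτ
      have hτ_apply : ∀ (b : Module.End ℂ ↥V₀) (i : Fin n), τ b i = b (bV i) := by
        intro b i; rfl
      set B : Submodule ℂ (Module.End ℂ ↥V₀) := LinearMap.range (cactL ρ') with hB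
      set U : Submodule ℂ (Fin n → ↥V₀) := Submodule.map τ B with hU
      -- U is a subcomodule of the power comodule
      have hBcomp : ∀ (ξ : Module.Dual ℂ D) (b : Module.End ℂ ↥V₀), b ∈ B →
          (cact ρ' ξ) ∘ₗ b ∈ B := by
        rintro ξ b ⟨η, rfl⟩
        refine ⟨conv ξ η, ?_⟩
        apply LinearMap.ext; intro v
        rw [cactL_apply, ← cact_cact]
        rfl
      have hUact : ∀ u ∈ U, ∀ ξ : Module.Dual ℂ D, cact ρn ξ u ∈ U := by
        rintro u ⟨b, hb, rfl⟩ ξ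
        refine ⟨(cact ρ' ξ) ∘ₗ b, hBcomp ξ b hb, ?_⟩
        funext i
        rw [hτ_apply, piCoacts_cact]
        rfl
      have hUsub : IsSubcomodule ρn U := isSubcomodule_of_cact hUact
      obtain ⟨U', hU'sub, hcompl⟩ := hD (Fin n → ↥V₀) ρn U hUsub
      set π : (Fin n → ↥V₀) →ₗ[ℂ] (Fin n → ↥V₀) :=
        U.subtype ∘ₗ Submodule.linearProjOfIsCompl U U' hcompl with hπ
      have hπ_left : ∀ u ∈ U, π u = u := by
        intro u hu
        show (U.subtype) (Submodule.projectionOnto U U' hcompl u) = u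
        rw [Submodule.projectionOnto_apply_of_mem_left hcompl hu]
        rfl
      have hπ_right : ∀ u' ∈ U', π u' = 0 := by
        intro u' hu'
        show (U.subtype) (Submodule.projectionOnto U U' hcompl u') = 0
        rw [Submodule.linearProjOfIsCompl_apply_right' hcompl hu']
        rfl
      have hπ_mem : ∀ w, π w ∈ U := fun w => (Submodule.linearProjOfIsCompl U U' hcompl w).2
      -- π commutes with the D-coaction
      have hπcomm : ∀ (ξ : Module.Dual ℂ D) (w : Fin n → ↥V₀),
          π (cact ρn ξ w) = cact ρn ξ (π w) := by
        intro ξ w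
        obtain ⟨⟨u, u'⟩, hsum, -⟩ := Submodule.existsUnique_add_of_isCompl_prod hcompl w
        have hdec : w = (u : Fin n → ↥V₀) + (u' : Fin n → ↥V₀) := hsum.symm
        rw [hdec, map_add, map_add, hπ_left _ (cact_mem_of_isSubcomodule hUsub ξ u.2),
          hπ_right _ (cact_mem_of_isSubcomodule hU'sub ξ u'.2), add_zero,
          map_add, hπ_left _ u.2, hπ_right _ u'.2, add_zero]
      -- components of π
      set πm : Fin n → Fin n → Module.End ℂ ↥V₀ := fun i j =>
        LinearMap.proj i ∘ₗ π ∘ₗ LinearMap.single ℂ (fun _ : Fin n => ↥V₀) j with hπm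
      have hπm_apply : ∀ i j (v : ↥V₀),
          πm i j v = π (LinearMap.single ℂ (fun _ : Fin n => ↥V₀) j v) i := fun i j v => rfl
      have hsingle_cact : ∀ (ξ : Module.Dual ℂ D) (j : Fin n) (v : ↥V₀),
          cact ρn ξ (LinearMap.single ℂ (fun _ : Fin n => ↥V₀) j v) =
          LinearMap.single ℂ (fun _ : Fin n => ↥V₀) j (cact ρ' ξ v) := by
        intro ξ j v
        funext i
        rw [show (ρn : CoactsOn D (Fin n → ↥V₀)) = piCoacts n ρ' from rfl, piCoacts_cact]
        by_cases hij : i = j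
        · subst hij
          simp [LinearMap.single_apply]
        · have h1 : (LinearMap.single ℂ (fun _ : Fin n => ↥V₀) j v) i = 0 := by
            simp [LinearMap.single_apply, Pi.single_eq_of_ne hij]
          rw [h1, map_zero]
          simp [LinearMap.single_apply, Pi.single_eq_of_ne hij]
      have hπm_comm : ∀ (ξ : Module.Dual ℂ D) (i j : Fin n) (v : ↥V₀),
          cact ρ' ξ (πm i j v) = πm i j (cact ρ' ξ v) := by
        intro ξ i j v
        rw [hπm_apply, hπm_apply]
        rw [show (ρ' : CoactsOn D ↥V₀) = ρ' from rfl]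
        calc cact ρ' ξ (π (LinearMap.single ℂ (fun _ : Fin n => ↥V₀) j v) i)
            = cact ρn ξ (π (LinearMap.single ℂ (fun _ : Fin n => ↥V₀) j v)) i := by
              rw [show (ρn : CoactsOn D (Fin n → ↥V₀)) = piCoacts n ρ' from rfl, piCoacts_cact]
          _ = π (cact ρn ξ (LinearMap.single ℂ (fun _ : Fin n => ↥V₀) j v)) i := by
              rw [hπcomm]
          _ = π (LinearMap.single ℂ (fun _ : Fin n => ↥V₀) j (cact ρ' ξ v)) i := by
              rw [hsingle_cact]
      have hπm_comod : ∀ i j, IsComodMap ρV ρV (πm i j) := by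
        intro i j
        apply hfull ↥V₀ ↥V₀ ρV ρV (πm i j)
        intro v
        apply eq_of_contr_eq
        intro ξ
        have hL : contr ξ (lTensor ↥V₀ f.toLinearMap (ρV.ρ (πm i j v))) =
            cact ρ' ξ (πm i j v) := rfl
        rw [hL, contr_rTensor, hπm_comm]
        rfl
      have hπm_commA : ∀ i j (v : ↥V₀), πm i j (cact ρV ξ₀ v) = cact ρV ξ₀ (πm i j v) := by
        intro i j v
        have h := hπm_comod i j v
        have h2 := congrArg (contr ξ₀) h
        rw [contr_rTensor] at h2
        exact h2.symm
      have hπ_comp : ∀ (w : Fin n → ↥V₀) (i : Fin n), π w i = ∑ j, πm i j (w j) := by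
        intro w i
        conv_lhs => rw [← Finset.univ_sum_single w]
        rw [map_sum, Finset.sum_apply]
        refine Finset.sum_congr rfl fun j _ => ?_
        rw [hπm_apply]
        congr 1
      have hdiag : ∀ w : Fin n → ↥V₀,
          π (fun i => cact ρV ξ₀ (w i)) = fun i => cact ρV ξ₀ (π w i) := by
        intro w
        funext i
        show π (fun i' => cact ρV ξ₀ (w i')) i = cact ρV ξ₀ (π w i)
        rw [hπ_comp, hπ_comp w i, map_sum]
        exact Finset.sum_congr rfl fun j _ => hπm_commA i j (w j)
      -- the endomorphism a₀ built from ξ₀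
      set a₀ : Module.End ℂ ↥V₀ := cact ρV ξ₀ with ha₀
      have hid : (LinearMap.id : Module.End ℂ ↥V₀) ∈ B := by
        refine ⟨Coalgebra.counit (R := ℂ), ?_⟩
        apply LinearMap.ext; intro v
        rw [cactL_apply, cact_counit]
        rfl
      have hw₀ : τ LinearMap.id ∈ U := ⟨LinearMap.id, hid, rfl⟩
      have hπw₀ : π (τ LinearMap.id) = τ LinearMap.id := hπ_left _ hw₀
      have hτa₀ : τ a₀ = fun i => a₀ ((τ LinearMap.id) i) := by
        funext i; rw [hτ_apply, hτ_apply]; rfl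
      have hπτa₀ : π (τ a₀) = τ a₀ := by
        rw [hτa₀, hdiag (τ LinearMap.id), hπw₀]
      have hmemU : τ a₀ ∈ U := by rw [← hπτa₀]; exact hπ_mem (τ a₀)
      obtain ⟨b, hbB, hbeq⟩ := hmemU
      have hba₀ : b = a₀ := by
        apply bV.ext
        intro i
        have h3 := congrFun (congrArg (fun (g : Fin n → ↥V₀) => g) hbeq) i
        rw [hτ_apply, hτ_apply] at h3
        exact h3
      obtain ⟨η, hη⟩ := hbB
      have heval := congrArg (fun (g : Module.End ℂ ↥V₀) =>
        Coalgebra.counit (R := ℂ) ((g ⟨x, hxV⟩ : ↥V₀) : C)) (hη.trans hba₀)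
      have hR : Coalgebra.counit (R := ℂ) ((a₀ ⟨x, hxV⟩ : ↥V₀) : C) = 1 := by
        rw [show ((a₀ ⟨x, hxV⟩ : ↥V₀) : C) = cact comulCoacts ξ₀ x from
          subCoacts_cact V₀ hstab ξ₀ ⟨x, hxV⟩]
        rw [counit_cact, hξ₀x]
      have hLev : Coalgebra.counit (R := ℂ) (((cactL ρ' η) ⟨x, hxV⟩ : ↥V₀) : C) = 0 := by
        rw [cactL_apply, show cact ρ' η (⟨x, hxV⟩ : ↥V₀) =
          cact ρV (η ∘ₗ f.toLinearMap) (⟨x, hxV⟩ : ↥V₀) from cact_cores f ρV η _]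
        rw [show ((cact ρV (η ∘ₗ f.toLinearMap) (⟨x, hxV⟩ : ↥V₀) : ↥V₀) : C) =
          cact comulCoacts (η ∘ₗ f.toLinearMap) x from
          subCoacts_cact V₀ hstab (η ∘ₗ f.toLinearMap) ⟨x, hxV⟩]
        rw [counit_cact, LinearMap.comp_apply]
        have : f.toLinearMap x = 0 := hx
        rw [this, map_zero]
      have h01 : (0 : ℂ) = 1 := by rw [← hLev, heval, hR]
      exact zero_ne_one h01
    intro a b hab
    have : f (a - b) = 0 := by rw [map_sub, hab, sub_self]
    exact sub_eq_zero.mp (hker _ this)
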